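/- arXiv:2506.12521 — 2 statements merged into one kernel-verified Lean document; each statement's English description precedes it below -/
import Mathlib

section
/- Let ⟨0⟩ be a C-hyperideal of a commutative multiplicative hyperring G and A a weakly quasi S-primary hyperideal of G that is not a quasi S-primary hyperideal of G. If A is a pure hyperideal of G, then A = ⟨0⟩. -/
open Set

/-- A commutative multiplicative hyperring: a commutative additive group with a
commutative, associative hyperoperation `hmul` satisfying `(-a)∘b = -(a∘b)`,
weak distributivity, and having an identity element `e` with `a ∈ e∘a`. -/
class MulHyperring (G : Type*) extends AddCommGroup G where
  hmul : G → G → Set G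
  hmul_nonempty : ∀ a b : G, (hmul a b).Nonempty
  hmul_comm : ∀ a b : G, hmul a b = hmul b a
  hmul_assoc : ∀ a b c : G, (⋃ x ∈ hmul a b, hmul x c) = ⋃ x ∈ hmul b c, hmul a x
  neg_hmul : ∀ a b : G, hmul (-a) b = (fun x => -x) '' (hmul a b)
  hmul_add : ∀ a b c : G,
    hmul a (b + c) ⊆ {x | ∃ u ∈ hmul a b, ∃ v ∈ hmul a c, x = u + v}
  e : G
  e_mem : ∀ a : G, a ∈ hmul e a

namespace MulHyperring

variable {G : Type*} [MulHyperring G]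

/-- Hyperproduct of an element with a set: `a ∘ B = ⋃ b ∈ B, a ∘ b`. -/
def smulSet (a : G) (B : Set G) : Set G := ⋃ b ∈ B, hmul a b

/-- Hyperproduct of two sets. -/
def setMul (A B : Set G) : Set G := ⋃ a ∈ A, ⋃ b ∈ B, hmul a b

/-- Hyperproduct `a₁ ∘ a₂ ∘ ⋯ ∘ aₙ` of a (nonempty) list of elements. -/
def hProd : List G → Set G
  | [] => ∅
  | [a] => {a}
  | a :: b :: l => smulSet a (hProd (b :: l))

/-- `aⁿ` as a hyperproduct. -/
def hPow (a : G) (n : ℕ) : Set G := hProd (List.replicate n a)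

/-- `A` is a hyperideal of `G`. -/
def IsHyperideal (A : Set G) : Prop :=
  A.Nonempty ∧ (∀ x ∈ A, ∀ y ∈ A, x - y ∈ A) ∧ ∀ r : G, ∀ x ∈ A, hmul r x ⊆ A

/-- `A` is a `C`-hyperideal: any finite hyperproduct meeting `A` is contained in `A`. -/
def IsCHyperideal (A : Set G) : Prop :=
  IsHyperideal A ∧ ∀ l : List G, l ≠ [] → (hProd l ∩ A).Nonempty → hProd l ⊆ A

/-- The radical of a (C-)hyperideal: `{a | aⁿ ⊆ A for some n ≥ 1}`. -/
def rad (A : Set G) : Set G := {a | ∃ n : ℕ, 1 ≤ n ∧ hPow a n ⊆ A}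

/-- The hyperideal generated by a set. -/
def idealGen (X : Set G) : Set G := ⋂₀ {A | IsHyperideal A ∧ X ⊆ A}

/-- The hyperideal product of two hyperideals. -/
def idealMul (A B : Set G) : Set G := idealGen (setMul A B)

/-- Multiplicative closed subset. -/
def IsMCS (S : Set G) : Prop :=
  e ∈ S ∧ ∀ s₁ ∈ S, ∀ s₂ ∈ S, (hmul s₁ s₂ ∩ S).Nonempty

/-- Prime hyperideal. -/
def IsPrime (P : Set G) : Prop :=
  IsHyperideal P ∧ P ≠ univ ∧ ∀ x y : G, hmul x y ⊆ P → x ∈ P ∨ y ∈ P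

/-- `S`-prime hyperideal. -/
def IsSPrime (S A : Set G) : Prop :=
  IsHyperideal A ∧ A ∩ S = ∅ ∧
    ∃ t ∈ S, ∀ u v : G, hmul u v ⊆ A → hmul t u ⊆ A ∨ hmul t v ⊆ A

/-- `S`-primary hyperideal. -/
def IsSPrimary (S A : Set G) : Prop :=
  IsHyperideal A ∧ A ∩ S = ∅ ∧
    ∃ t ∈ S, ∀ u v : G, hmul u v ⊆ A → hmul t u ⊆ A ∨ hmul t v ⊆ rad A

/-- Quasi `S`-primary hyperideal. -/
def IsQuasiSPrimary (S A : Set G) : Prop :=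
  IsHyperideal A ∧ A ∩ S = ∅ ∧
    ∃ t ∈ S, ∀ u v : G, hmul u v ⊆ A → hmul t u ⊆ rad A ∨ hmul t v ⊆ rad A

/-- Weakly quasi `S`-primary hyperideal. -/
def IsWeaklyQuasiSPrimary (S A : Set G) : Prop :=
  IsHyperideal A ∧ A ∩ S = ∅ ∧
    ∃ t ∈ S, ∀ u v : G, 0 ∉ hmul u v → hmul u v ⊆ A →
      hmul t u ⊆ rad A ∨ hmul t v ⊆ rad A

/-- Strongly quasi `S`-primary hyperideal. -/
def IsStronglyQuasiSPrimary (S A : Set G) : Prop :=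
  IsHyperideal A ∧ A ∩ S = ∅ ∧
    ∃ t ∈ S, ∀ u v : G, hmul u v ⊆ A →
      smulSet t (hPow u 2) ⊆ A ∨ hmul t v ⊆ rad A

/-- The residual `(B : x) = {y | y ∘ x ⊆ B}`. -/
def colon (B : Set G) (x : G) : Set G := {y | hmul y x ⊆ B}

end MulHyperring

namespace MulHyperring

variable {G : Type*} [MulHyperring G]

lemma aux_zero_mem {A : Set G} (hA : IsHyperideal A) : (0 : G) ∈ A := by
  obtain ⟨⟨x, hx⟩, hsub, _⟩ := hA
  simpa using hsub x hx x hx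

lemma aux_neg_mem {A : Set G} (hA : IsHyperideal A) {x : G} (hx : x ∈ A) : -x ∈ A := by
  simpa using hA.2.1 0 (aux_zero_mem hA) x hx

lemma aux_add_mem {A : Set G} (hA : IsHyperideal A) {x y : G} (hx : x ∈ A) (hy : y ∈ A) :
    x + y ∈ A := by
  simpa [sub_neg_eq_add] using hA.2.1 x hx (-y) (aux_neg_mem hA hy)

lemma aux_gen_zero_subset {A : Set G} (hA : IsHyperideal A) :
    (idealGen {0} : Set G) ⊆ A := by
  intro x hx
  exact hx A ⟨hA, by simpa using aux_zero_mem hA⟩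

lemma aux_hProd_pair (a b : G) : hProd [a, b] = hmul a b := by
  simp [hProd, smulSet]

/-- If `a∘b` meets `⟨0⟩` then `a∘b ⊆ ⟨0⟩`. -/
lemma aux_Cpair (h0C : IsCHyperideal (idealGen {0} : Set G)) {a b w : G}
    (hw : w ∈ hmul a b) (hw0 : w ∈ (idealGen {0} : Set G)) :
    hmul a b ⊆ (idealGen {0} : Set G) := by
  have := h0C.2 [a, b] (by simp) ⟨w, by rw [aux_hProd_pair]; exact hw, hw0⟩
  rwa [aux_hProd_pair] at this

lemma aux_hPow_one (a : G) : hPow a 1 = {a} := by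
  simp [hPow, hProd]

lemma aux_hPow_succ (a : G) (k : ℕ) (hk : 1 ≤ k) :
    hPow a (k + 1) = smulSet a (hPow a k) := by
  cases k with
  | zero => omega
  | succ m => simp [hPow, List.replicate_succ, hProd]

lemma aux_mem_rad {A : Set G} {x : G} (hx : x ∈ A) : x ∈ rad A :=
  ⟨1, le_refl 1, by rw [aux_hPow_one]; simpa using hx⟩

lemma aux_hPow_add_subset {A : Set G} (hA : IsHyperideal A) {q : G} (hq : q ∈ A) (p : G) :
    ∀ k, 1 ≤ k → ∀ w ∈ hPow (p + q) k, ∃ y ∈ hPow p k, ∃ a ∈ A, w = y + a := by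
  intro k
  induction k with
  | zero => intro h; omega
  | succ k ih =>
    intro _ w hw
    rcases Nat.eq_zero_or_pos k with h1 | h1
    · subst h1
      simp only [Nat.zero_add, aux_hPow_one] at hw ⊢
      exact ⟨p, rfl, q, hq, hw⟩
    · have hk : 1 ≤ k := h1
      rw [aux_hPow_succ _ k hk] at hw
      simp only [smulSet, mem_iUnion] at hw
      obtain ⟨z, hz, hwz⟩ := hw
      obtain ⟨y, hy, a, ha, rfl⟩ := ih hk z hz
      -- w ∈ (p+q)∘(y+a)
      have h1' : hmul (p + q) (y + a) ⊆
          {x | ∃ u ∈ hmul (p + q) y, ∃ v ∈ hmul (p + q) a, x = u + v} :=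
        hmul_add (p + q) y a
      obtain ⟨u, hu, v, hv, rfl⟩ := h1' hwz
      have hvA : v ∈ A := hA.2.2 (p + q) a ha hv
      -- u ∈ (p+q)∘y = y∘(p+q) ⊆ y∘p + y∘q
      rw [hmul_comm] at hu
      obtain ⟨u', hu', v', hv', rfl⟩ := hmul_add y p q hu
      have hv'A : v' ∈ A := hA.2.2 y q hq hv'
      refine ⟨u', ?_, v' + v, aux_add_mem hA hv'A hvA, by abel⟩
      rw [aux_hPow_succ _ k hk]
      simp only [smulSet, mem_iUnion]
      exact ⟨y, hy, by rwa [hmul_comm] at hu'⟩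

lemma aux_rad_add {A : Set G} (hA : IsHyperideal A) {p q : G}
    (hp : p ∈ rad A) (hq : q ∈ A) : p + q ∈ rad A := by
  obtain ⟨n, hn, hpn⟩ := hp
  refine ⟨n, hn, fun w hw => ?_⟩
  obtain ⟨y, hy, a, ha, rfl⟩ := aux_hPow_add_subset hA hq p n hn w hw
  exact aux_add_mem hA (hpn hy) ha

/-- If `t∘(u+a) ⊆ rad A` with `a ∈ A`, then `t∘u ⊆ rad A`. -/
lemma aux_shift {A : Set G} (hA : IsHyperideal A) {t u a : G} (ha : a ∈ A)
    (h : hmul t (u + a) ⊆ rad A) : hmul t u ⊆ rad A := by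
  intro w hw
  have hrw : u = (u + a) + (-a) := by abel
  rw [hrw] at hw
  obtain ⟨p, hp, q, hq, rfl⟩ := hmul_add t (u + a) (-a) hw
  exact aux_rad_add hA (h hp) (hA.2.2 t (-a) (aux_neg_mem hA ha) hq)

end MulHyperring

open MulHyperring in
theorem weaklyQuasiSPrimary_pure_eq_zero {G : Type*} [MulHyperring G] (A S : Set G)
    (hS : IsMCS S) (h0C : IsCHyperideal (idealGen {0} : Set G))
    (hw : IsWeaklyQuasiSPrimary S A) (hnq : ¬ IsQuasiSPrimary S A)
    (hpure : A = {x ∈ A | ∃ a ∈ A, x ∈ hmul x a}) :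
    A = (idealGen {0} : Set G) := by
  obtain ⟨hA, hAS, t, htS, hwk⟩ := hw
  set Z : Set G := idealGen {0} with hZdef
  have hZideal : IsHyperideal Z := h0C.1
  have hZA : Z ⊆ A := aux_gen_zero_subset hA
  have h0Z : (0 : G) ∈ Z := aux_zero_mem hZideal
  -- key claim: all products of elements of A land in Z
  have key : ∀ a ∈ A, ∀ b ∈ A, hmul a b ⊆ Z := by
    by_contra hcon
    push_neg at hcon
    obtain ⟨a, ha, b, hb, hab⟩ := hcon
    have habZ : ∀ w ∈ hmul a b, w ∉ Z := fun w hw hwZ => hab (aux_Cpair h0C hw hwZ)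
    apply hnq
    refine ⟨hA, hAS, t, htS, fun u v huv => ?_⟩
    by_cases h0 : 0 ∈ hmul u v
    · have huvZ : hmul u v ⊆ Z := aux_Cpair h0C h0 h0Z
      by_cases hu : ∀ c ∈ A, hmul u c ⊆ Z
      · by_cases hv : ∀ c ∈ A, hmul v c ⊆ Z
        · -- consider (u+a)∘(v+b)
          have hsub : ∀ w ∈ hmul (u + a) (v + b), ∃ z ∈ Z, ∃ c ∈ hmul a b, w = z + c := by
            intro w hw
            obtain ⟨p, hp, q, hq, rfl⟩ := hmul_add (u + a) v b hw
            rw [hmul_comm] at hp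
            obtain ⟨p1, hp1, p2, hp2, rfl⟩ := hmul_add v u a hp
            rw [hmul_comm] at hq
            obtain ⟨q1, hq1, q2, hq2, rfl⟩ := hmul_add b u a hq
            have hp1Z : p1 ∈ Z := huvZ (by rwa [hmul_comm])
            have hp2Z : p2 ∈ Z := hv a ha hp2
            have hq1Z : q1 ∈ Z := hu b hb (by rwa [hmul_comm])
            refine ⟨p1 + p2 + q1, ?_, q2, by rwa [hmul_comm], by abel⟩
            exact aux_add_mem hZideal (aux_add_mem hZideal hp1Z hp2Z) hq1Z
          have h0' : 0 ∉ hmul (u + a) (v + b) := by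
            intro h
            obtain ⟨z, hz, c, hc, hzc⟩ := hsub 0 h
            have hdz : c = -z := by rw [eq_neg_iff_add_eq_zero, add_comm]; exact hzc.symm
            exact habZ c hc (hdz ▸ aux_neg_mem hZideal hz)
          have hsubA : hmul (u + a) (v + b) ⊆ A := by
            intro w hw
            obtain ⟨z, hz, c, hc, rfl⟩ := hsub w hw
            exact aux_add_mem hA (hZA hz) (hA.2.2 a b hb hc)
          rcases hwk (u + a) (v + b) h0' hsubA with h | h
          · exact Or.inl (aux_shift hA ha h)
          · exact Or.inr (aux_shift hA hb h)
        · -- ∃ c ∈ A, v∘c ⊄ Z : consider v∘(u+c)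
          push_neg at hv
          obtain ⟨c, hcA, hvc⟩ := hv
          have hvcZ : ∀ w ∈ hmul v c, w ∉ Z := fun w hw hwZ => hvc (aux_Cpair h0C hw hwZ)
          have hsub : ∀ w ∈ hmul v (u + c), ∃ z ∈ Z, ∃ d ∈ hmul v c, w = z + d := by
            intro w hw
            obtain ⟨p, hp, q, hq, rfl⟩ := hmul_add v u c hw
            exact ⟨p, huvZ (by rwa [hmul_comm]), q, hq, rfl⟩
          have h0' : 0 ∉ hmul v (u + c) := by
            intro h
            obtain ⟨z, hz, d, hd, hzd⟩ := hsub 0 h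
            have hdz : d = -z := by rw [eq_neg_iff_add_eq_zero, add_comm]; exact hzd.symm
            exact hvcZ d hd (hdz ▸ aux_neg_mem hZideal hz)
          have hsubA : hmul v (u + c) ⊆ A := by
            intro w hw
            obtain ⟨z, hz, d, hd, rfl⟩ := hsub w hw
            exact aux_add_mem hA (hZA hz) (hA.2.2 v c hcA hd)
          rw [hmul_comm] at h0' hsubA
          rcases hwk (u + c) v h0' hsubA with h | h
          · exact Or.inl (aux_shift hA hcA h)
          · exact Or.inr h
      · -- ∃ c ∈ A, u∘c ⊄ Z : consider u∘(v+c)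
        push_neg at hu
        obtain ⟨c, hcA, huc⟩ := hu
        have hucZ : ∀ w ∈ hmul u c, w ∉ Z := fun w hw hwZ => huc (aux_Cpair h0C hw hwZ)
        have hsub : ∀ w ∈ hmul u (v + c), ∃ z ∈ Z, ∃ d ∈ hmul u c, w = z + d := by
          intro w hw
          obtain ⟨p, hp, q, hq, rfl⟩ := hmul_add u v c hw
          exact ⟨p, huvZ hp, q, hq, rfl⟩
        have h0' : 0 ∉ hmul u (v + c) := by
          intro h
          obtain ⟨z, hz, d, hd, hzd⟩ := hsub 0 h
          have hdz : d = -z := by rw [eq_neg_iff_add_eq_zero, add_comm]; exact hzd.symm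
          exact hucZ d hd (hdz ▸ aux_neg_mem hZideal hz)
        have hsubA : hmul u (v + c) ⊆ A := by
          intro w hw
          obtain ⟨z, hz, d, hd, rfl⟩ := hsub w hw
          exact aux_add_mem hA (hZA hz) (hA.2.2 u c hcA hd)
        rcases hwk u (v + c) h0' hsubA with h | h
        · exact Or.inl h
        · exact Or.inr (aux_shift hA hcA h)
    · exact hwk u v h0 huv
  -- conclude
  apply Subset.antisymm _ hZA
  intro x hx
  have hx' : x ∈ {x ∈ A | ∃ a ∈ A, x ∈ hmul x a} := hpure ▸ hx
  obtain ⟨hxA, a, haA, hxa⟩ := hx'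
  exact key x hxA a haA hxa
end

section
/- Let A be a C-hyperideal of a commutative multiplicative hyperring G and S an MCS with A ∩ S = ∅ such that t∘rad(A)² ⊆ A for some t ∈ S. Then A is a strongly quasi S-primary hyperideal of G if and only if A is a quasi S-primary hyperideal of G. -/
open Set

namespace MulHyperring

variable {G : Type*} [MulHyperring G]

lemma smul_mono (a : G) {B C : Set G} (h : B ⊆ C) : smulSet a B ⊆ smulSet a C := by
  intro y hy
  rcases Set.mem_iUnion₂.1 hy with ⟨b, hb, hyb⟩
  exact Set.mem_iUnion₂.2 ⟨b, h hb, hyb⟩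

lemma hsmul_singleton (a b : G) : smulSet a ({b} : Set G) = hmul a b := by
  simp [smulSet]

lemma mem_smul_subset {a b x : G} (hx : x ∈ hmul a b) (C : Set G) :
    smulSet x C ⊆ smulSet a (smulSet b C) := by
  intro y hy
  rcases Set.mem_iUnion₂.1 hy with ⟨c, hc, hyc⟩
  have h1 : y ∈ ⋃ w ∈ hmul a b, hmul w c := Set.mem_iUnion₂.2 ⟨x, hx, hyc⟩
  rw [hmul_assoc] at h1
  rcases Set.mem_iUnion₂.1 h1 with ⟨w, hw, hyw⟩
  exact Set.mem_iUnion₂.2 ⟨w, Set.mem_iUnion₂.2 ⟨c, hc, hw⟩, hyw⟩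

lemma smul_smul_comm_sub (a b : G) (C : Set G) :
    smulSet a (smulSet b C) ⊆ smulSet b (smulSet a C) := by
  intro y hy
  rcases Set.mem_iUnion₂.1 hy with ⟨w, hw, hyw⟩
  rcases Set.mem_iUnion₂.1 hw with ⟨c, hc, hwc⟩
  have h1 : y ∈ ⋃ w ∈ hmul b c, hmul a w := Set.mem_iUnion₂.2 ⟨w, hwc, hyw⟩
  rw [← hmul_assoc] at h1
  rw [hmul_comm a b] at h1
  rw [hmul_assoc] at h1
  rcases Set.mem_iUnion₂.1 h1 with ⟨w', hw', hyw'⟩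
  exact Set.mem_iUnion₂.2 ⟨w', Set.mem_iUnion₂.2 ⟨c, hc, hw'⟩, hyw'⟩

lemma smul_smul_comm (a b : G) (C : Set G) :
    smulSet a (smulSet b C) = smulSet b (smulSet a C) :=
  Set.Subset.antisymm (smul_smul_comm_sub a b C) (smul_smul_comm_sub b a C)

lemma ideal_absorb {A : Set G} (hA : IsHyperideal A) (r : G) {B : Set G} (hB : B ⊆ A) :
    smulSet r B ⊆ A := by
  intro y hy
  rcases Set.mem_iUnion₂.1 hy with ⟨b, hb, hyb⟩
  exact hA.2.2 r b (hB hb) hyb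

lemma hPow_one (a : G) : hPow a 1 = ({a} : Set G) := by
  simp [hPow, hProd]

lemma hPow_succ' (a : G) (n : ℕ) (hn : 1 ≤ n) :
    hPow a (n + 1) = smulSet a (hPow a n) := by
  obtain ⟨m, rfl⟩ := Nat.exists_eq_add_of_le hn
  simp only [hPow]
  rw [show 1 + m + 1 = m + 2 by omega, show 1 + m = m + 1 by omega]
  rw [List.replicate_succ (a := a) (n := m+1), List.replicate_succ (a := a) (n := m)]
  rfl

lemma hPow_two (a : G) : hPow a 2 = hmul a a := by
  rw [show (2:ℕ) = 1 + 1 by rfl, hPow_succ' a 1 le_rfl, hPow_one, hsmul_singleton]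

lemma iter_smul_comm (a b : G) (k : ℕ) (C : Set G) :
    smulSet b ((smulSet a)^[k] C) = (smulSet a)^[k] (smulSet b C) := by
  induction k generalizing C with
  | zero => rfl
  | succ k ih =>
    rw [Function.iterate_succ', Function.comp_apply, smul_smul_comm,
      ih, ← Function.iterate_succ', Function.iterate_succ']
    rfl

lemma iter_absorb {A : Set G} (hA : IsHyperideal A) (a : G) (k : ℕ) {B : Set G}
    (hB : B ⊆ A) : (smulSet a)^[k] B ⊆ A := by
  induction k with
  | zero => exact hB
  | succ k ih =>
    rw [Function.iterate_succ', Function.comp_apply]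
    exact ideal_absorb hA a ih

lemma pow_mem_hmul {a r x : G} (hx : x ∈ hmul a r) :
    ∀ k : ℕ, 1 ≤ k → hPow x k ⊆ (smulSet a)^[k] (hPow r k) := by
  intro k
  induction k with
  | zero => intro h; omega
  | succ k ih =>
    intro _
    rcases Nat.eq_zero_or_pos k with hk | hk
    · subst hk
      rw [hPow_one, hPow_one, Function.iterate_one, hsmul_singleton]
      exact Set.singleton_subset_iff.2 hx
    · rw [hPow_succ' x k hk, hPow_succ' r k hk]
      calc smulSet x (hPow x k)
          ⊆ smulSet x ((smulSet a)^[k] (hPow r k)) := smul_mono x (ih hk)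
        _ ⊆ smulSet a (smulSet r ((smulSet a)^[k] (hPow r k))) :=
            mem_smul_subset hx _
        _ = smulSet a ((smulSet a)^[k] (smulSet r (hPow r k))) := by
            rw [iter_smul_comm]
        _ = (smulSet a)^[k+1] (smulSet r (hPow r k)) := by
            rw [Function.iterate_succ', Function.comp_apply]

lemma rad_absorb {A : Set G} (hA : IsHyperideal A) (a : G) {r : G} (hr : r ∈ rad A) :
    hmul a r ⊆ rad A := by
  obtain ⟨n, hn, hrn⟩ := hr
  intro x hx
  exact ⟨n, hn, (pow_mem_hmul hx n hn).trans (iter_absorb hA a n hrn)⟩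

lemma subset_idealGen (X : Set G) : X ⊆ idealGen X := by
  intro x hx
  exact fun B hB => hB.2 hx

end MulHyperring

open MulHyperring in
theorem stronglyQuasiSPrimary_iff_quasi {G : Type*} [MulHyperring G] (A S : Set G) (hA : IsCHyperideal A)
    (hS : IsMCS S) (hAS : A ∩ S = ∅)
    (ht : ∃ t ∈ S, smulSet t (idealMul (rad A) (rad A)) ⊆ A) :
    IsStronglyQuasiSPrimary S A ↔ IsQuasiSPrimary S A := by
  obtain ⟨t, htS, htA⟩ := ht
  have hAid : IsHyperideal A := hA.1
  constructor
  · rintro ⟨_, _, t₁, ht₁, H⟩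
    refine ⟨hAid, hAS, t₁, ht₁, fun u v huv => ?_⟩
    rcases H u v huv with h | h
    · left
      intro x hx
      refine ⟨2, by norm_num, ?_⟩
      rw [hPow_two]
      have h1 : hmul x x = smulSet x ({x} : Set G) := (hsmul_singleton x x).symm
      rw [h1]
      have h2 : smulSet x ({x} : Set G) ⊆ smulSet t₁ (smulSet u ({x} : Set G)) :=
        mem_smul_subset hx _
      have h3 : smulSet u ({x} : Set G) ⊆ smulSet t₁ (smulSet u ({u} : Set G)) := by
        rw [hsmul_singleton, hmul_comm u x, ← hsmul_singleton x u]
        exact mem_smul_subset hx _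
      have h4 : smulSet t₁ (smulSet u ({u} : Set G)) ⊆ A := by
        rw [hsmul_singleton, ← hPow_two]
        exact h
      exact h2.trans ((smul_mono t₁ h3).trans (ideal_absorb hAid t₁ h4))
    · exact Or.inr h
  · rintro ⟨_, _, t₂, ht₂, H⟩
    obtain ⟨s₂, hs₂m, hs₂S⟩ := hS.2 t₂ ht₂ t₂ ht₂
    obtain ⟨t', ht'm, ht'S⟩ := hS.2 t htS s₂ hs₂S
    refine ⟨hAid, hAS, t', ht'S, fun u v huv => ?_⟩
    rcases H u v huv with h | h
    · left
      rw [hPow_two, ← hsmul_singleton u u]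
      calc smulSet t' (smulSet u ({u} : Set G))
          ⊆ smulSet t (smulSet s₂ (smulSet u ({u} : Set G))) := mem_smul_subset ht'm _
        _ ⊆ smulSet t (smulSet t₂ (smulSet t₂ (smulSet u ({u} : Set G)))) :=
            smul_mono t (mem_smul_subset hs₂m _)
        _ = smulSet t (smulSet t₂ (smulSet u (smulSet t₂ ({u} : Set G)))) := by
            rw [smul_smul_comm t₂ u]
        _ ⊆ smulSet t (idealMul (rad A) (rad A)) := ?_
        _ ⊆ A := htA
      refine smul_mono t ?_
      refine Set.Subset.trans ?_ (subset_idealGen _)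
      intro y hy
      rcases Set.mem_iUnion₂.1 hy with ⟨w, hw, hyw⟩
      rcases Set.mem_iUnion₂.1 hw with ⟨z, hz, hwz⟩
      rw [hsmul_singleton] at hz
      have hz' : z ∈ rad A := h hz
      -- y ∈ hmul t₂ w, w ∈ hmul u z
      have h1 : y ∈ ⋃ x ∈ hmul u z, hmul t₂ x := Set.mem_iUnion₂.2 ⟨w, hwz, hyw⟩
      rw [← hmul_assoc] at h1
      rcases Set.mem_iUnion₂.1 h1 with ⟨x, hx, hyx⟩
      have hxrad : x ∈ rad A := h hx
      exact Set.mem_iUnion₂.2 ⟨x, hxrad, Set.mem_iUnion₂.2 ⟨z, hz', hyx⟩⟩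
    · right
      have h1 : hmul t' v ⊆ smulSet t (smulSet s₂ ({v} : Set G)) := by
        rw [← hsmul_singleton t' v]; exact mem_smul_subset ht'm _
      have h2 : smulSet s₂ ({v} : Set G) ⊆ smulSet t₂ (smulSet t₂ ({v} : Set G)) :=
        mem_smul_subset hs₂m _
      have h3 : smulSet t₂ (smulSet t₂ ({v} : Set G)) ⊆ rad A := by
        rw [hsmul_singleton]
        intro y hy
        rcases Set.mem_iUnion₂.1 hy with ⟨w, hw, hyw⟩
        exact rad_absorb hAid t₂ (h hw) hyw
      have h4 : smulSet t (smulSet s₂ ({v} : Set G)) ⊆ rad A := by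
        intro y hy
        rcases Set.mem_iUnion₂.1 hy with ⟨w, hw, hyw⟩
        exact rad_absorb hAid t (h3 (h2 hw)) hyw
      exact h1.trans h4
end
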